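/- Continuity of normalized hazard-type integrals under uniform convergence (supporting lemma for the GLR statistic): Let tau > 0, delta > 0, and lambda in [0, 1]. Let u_n, v_n, u, v : [0, tau] -> [0, 1] be nonincreasing right-continuous functions with u and v continuous, sup|u_n - u| -> 0, sup|v_n - v| -> 0, and lambda u_n(t-) + (1 - lambda) v_n(t-) >= delta for all t in (0, tau] and all n. Then integral over (0, tau] of [ u_n(t-) / ( lambda u_n(t-) + (1-lambda) v_n(t-) ) ] dv_n(t) converges to integral over (0, tau] of [ u(t) / ( lambda u(t) + (1-lambda) v(t) ) ] dv(t) as n -> infinity. -/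

import Mathlib

open MeasureTheory Filter Set Function Topology
open scoped ENNReal


/-- Global antitone extension of a function antitone on `[0, τ]` with values in `[0,1]`. -/
noncomputable def hazExt (τ : ℝ) (w : ℝ → ℝ) : ℝ → ℝ := fun t =>
  if t ≤ 0 then 1 else w (min t τ)

lemma hazExt_eqOn {τ : ℝ} (w : ℝ → ℝ) : EqOn (hazExt τ w) w (Ioc 0 τ) := by
  intro t ht
  simp [hazExt, not_le.2 ht.1, min_eq_left ht.2]

lemma hazExt_antitone {τ : ℝ} (hτ : 0 ≤ τ) {w : ℝ → ℝ}
    (hw : AntitoneOn w (Icc 0 τ)) (hr : ∀ t ∈ Icc 0 τ, w t ∈ Icc (0:ℝ) 1) :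
    Antitone (hazExt τ w) := by
  intro s t hst
  by_cases hs : s ≤ 0
  · by_cases ht : t ≤ 0
    · simp [hazExt, hs, ht]
    · simp only [hazExt, hs, ht, if_true, if_false]
      exact (hr _ ⟨le_min (le_of_not_ge ht) hτ, min_le_right _ _⟩).2
  · have ht : ¬ t ≤ 0 := fun h => hs (hst.trans h)
    simp only [hazExt, hs, ht, if_false]
    exact hw ⟨le_min (le_of_not_ge hs) hτ, min_le_right _ _⟩
      ⟨le_min (le_of_not_ge ht) hτ, min_le_right _ _⟩
      (min_le_min hst le_rfl)

lemma hazExt_range {τ : ℝ} (hτ : 0 ≤ τ) {w : ℝ → ℝ}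
    (hr : ∀ t ∈ Icc 0 τ, w t ∈ Icc (0:ℝ) 1) (t : ℝ) : hazExt τ w t ∈ Icc (0:ℝ) 1 := by
  by_cases ht : t ≤ 0
  · simp [hazExt, ht]
  · simp only [hazExt, ht, if_false]
    exact hr _ ⟨le_min (le_of_not_ge ht) hτ, min_le_right _ _⟩

/-- On `(0,τ]`, the left limit of `w` agrees with the left limit of the extension. -/
lemma hazExt_leftLim_eq {τ : ℝ} (hτ : 0 ≤ τ) {w : ℝ → ℝ}
    (hw : AntitoneOn w (Icc 0 τ)) (hr : ∀ t ∈ Icc 0 τ, w t ∈ Icc (0:ℝ) 1)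
    {t : ℝ} (ht : t ∈ Ioc 0 τ) :
    Function.leftLim w t = Function.leftLim (hazExt τ w) t := by
  have hA : Antitone (hazExt τ w) := hazExt_antitone hτ hw hr
  have h1 : Tendsto (hazExt τ w) (𝓝[<] t) (𝓝 (Function.leftLim (hazExt τ w) t)) :=
    hA.tendsto_leftLim t
  have hmem : Ioo 0 t ∈ 𝓝[<] t := Ioo_mem_nhdsLT_of_mem ⟨ht.1, le_rfl⟩
  have h2 : Tendsto w (𝓝[<] t) (𝓝 (Function.leftLim (hazExt τ w) t)) := by
    refine h1.congr' ?_
    filter_upwards [hmem] with x hx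
    exact hazExt_eqOn w ⟨hx.1, hx.2.le.trans ht.2⟩
  exact leftLim_eq_of_tendsto h2

/-- Range bound for `leftLim` of an antitone `[0,1]`-valued function. -/
lemma leftLim_mem_Icc {W : ℝ → ℝ} (hW : Antitone W) (hr : ∀ t, W t ∈ Icc (0:ℝ) 1)
    (t : ℝ) (ht : 0 < t) : Function.leftLim W t ∈ Icc (0:ℝ) 1 :=
  ⟨(hr t).1.trans (hW.le_leftLim le_rfl), (hW.leftLim_le ht).trans (hr 0).2⟩

/-- Quantitative bound: the left limit of `W` is within `M` of a left-continuous limit of `w₀`. -/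
lemma abs_leftLim_sub_le {W w₀ : ℝ → ℝ} (hW : Antitone W) {t M : ℝ}
    (h0 : Tendsto w₀ (𝓝[<] t) (𝓝 (w₀ t)))
    (hM : ∀ᶠ x in 𝓝[<] t, |W x - w₀ x| ≤ M) :
    |Function.leftLim W t - w₀ t| ≤ M := by
  have h1 : Tendsto (fun x => |W x - w₀ x|) (𝓝[<] t)
      (𝓝 |Function.leftLim W t - w₀ t|) := ((hW.tendsto_leftLim t).sub h0).abs
  exact le_of_tendsto h1 hM



lemma haz_integrableOn {τ : ℝ} {f : ℝ → ℝ} {w : ℝ → ℝ} {μ : Measure ℝ}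
    (hμ : ∀ a b : ℝ, a ∈ Icc 0 τ → b ∈ Icc 0 τ → a ≤ b →
      μ (Ioc a b) = ENNReal.ofReal (w a - w b))
    (hfc : ContinuousOn f (Icc 0 τ))
    {a b : ℝ} (ha : a ∈ Icc 0 τ) (hb : b ∈ Icc 0 τ) (hab : a ≤ b) :
    IntegrableOn f (Ioc a b) μ := by
  obtain ⟨C, hC⟩ := (isCompact_Icc (a := (0:ℝ)) (b := τ)).exists_bound_of_continuousOn hfc
  have hsub : Ioc a b ⊆ Icc 0 τ := fun x hx => ⟨ha.1.trans hx.1.le, hx.2.trans hb.2⟩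
  have hfin : μ (Ioc a b) ≠ ∞ := by rw [hμ a b ha hb hab]; exact ENNReal.ofReal_ne_top
  haveI : IsFiniteMeasure (μ.restrict (Ioc a b)) :=
    ⟨by rwa [Measure.restrict_apply_univ, lt_top_iff_ne_top]⟩
  refine Integrable.mono' (integrable_const C)
    ((hfc.mono hsub).aestronglyMeasurable measurableSet_Ioc) ?_
  exact (ae_restrict_iff' measurableSet_Ioc).2 (ae_of_all _ fun x hx => hC x (hsub hx))

lemma haz_partition_approx {τ : ℝ} (hτ : 0 < τ) {f w : ℝ → ℝ} {μ : Measure ℝ}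
    (hμ : ∀ a b : ℝ, a ∈ Icc 0 τ → b ∈ Icc 0 τ → a ≤ b →
      μ (Ioc a b) = ENNReal.ofReal (w a - w b))
    (hw : AntitoneOn w (Icc 0 τ))
    (hfc : ContinuousOn f (Icc 0 τ))
    {ε' δ' : ℝ} (hδ' : 0 < δ')
    (hmod : ∀ s ∈ Icc 0 τ, ∀ t ∈ Icc 0 τ, |s - t| < δ' → |f s - f t| ≤ ε')
    {k : ℕ} (hk : 0 < k) (hkδ : τ / k < δ') :
    |(∫ t in Ioc 0 τ, f t ∂μ) -
      ∑ i ∈ Finset.range k,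
        f ((i+1) * (τ/k)) * (w (i * (τ/k)) - w ((i+1) * (τ/k)))| ≤
      ε' * (w 0 - w τ) := by
  have hε' : 0 ≤ ε' := by
    have := hmod 0 ⟨le_rfl, hτ.le⟩ 0 ⟨le_rfl, hτ.le⟩ (by simpa using hδ')
    simpa using this
  set h : ℝ := τ / k with hh
  have hhpos : 0 < h := div_pos hτ (by exact_mod_cast hk)
  have hkh : (k : ℝ) * h = τ := by
    rw [hh, mul_div_cancel₀]
    exact_mod_cast hk.ne'
  have hmem : ∀ j : ℕ, j ≤ k → (j : ℝ) * h ∈ Icc (0:ℝ) τ := by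
    intro j hj
    constructor
    · positivity
    · rw [← hkh]
      exact mul_le_mul_of_nonneg_right (by exact_mod_cast hj) hhpos.le
  have key : ∀ j : ℕ, j ≤ k →
      |(∫ t in Ioc 0 ((j:ℝ) * h), f t ∂μ) -
        ∑ i ∈ Finset.range j, f ((i+1) * h) * (w (i * h) - w ((i+1) * h))| ≤
      ε' * (w 0 - w ((j:ℝ) * h)) := by
    intro j
    induction j with
    | zero => simp
    | succ j ih =>
      intro hjk
      have hjk' : j ≤ k := Nat.le_of_succ_le hjk
      have ih' := ih hjk'
      set a : ℝ := (j : ℝ) * h with ha'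
      set b : ℝ := ((j:ℕ) + 1 : ℝ) * h with hb'
      have hcast : ((j + 1 : ℕ) : ℝ) * h = b := by push_cast [hb']; ring
      have ha : a ∈ Icc (0:ℝ) τ := hmem j hjk'
      have hb : b ∈ Icc (0:ℝ) τ := by rw [← hcast]; exact hmem (j+1) hjk
      have hab : a ≤ b := by
        rw [ha', hb']
        exact mul_le_mul_of_nonneg_right (by linarith) hhpos.le
      have hba : b - a = h := by rw [ha', hb']; ring
      have h0 : (0:ℝ) ∈ Icc (0:ℝ) τ := ⟨le_rfl, hτ.le⟩
      -- split the integral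
      have hsplit : (∫ t in Ioc 0 b, f t ∂μ) =
          (∫ t in Ioc 0 a, f t ∂μ) + ∫ t in Ioc a b, f t ∂μ := by
        rw [← Ioc_union_Ioc_eq_Ioc ha.1 hab]
        exact setIntegral_union (Ioc_disjoint_Ioc_of_le le_rfl) measurableSet_Ioc
          (haz_integrableOn hμ hfc h0 ha ha.1) (haz_integrableOn hμ hfc ha hb hab)
      -- middle estimate
      have hwab : 0 ≤ w a - w b := sub_nonneg.2 (hw ha hb hab)
      have hμab : μ (Ioc a b) = ENNReal.ofReal (w a - w b) := hμ a b ha hb hab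
      have htoReal : (μ (Ioc a b)).toReal = w a - w b := by
        rw [hμab, ENNReal.toReal_ofReal hwab]
      have hconst : (∫ _ in Ioc a b, f b ∂μ) = (w a - w b) * f b := by
        rw [setIntegral_const, measureReal_def, htoReal, smul_eq_mul]
      have hfin : μ (Ioc a b) < ∞ := by rw [hμab]; exact ENNReal.ofReal_lt_top
      have hmid : |(∫ t in Ioc a b, f t ∂μ) - f b * (w a - w b)| ≤ ε' * (w a - w b) := by
        have hint : (∫ t in Ioc a b, f t ∂μ) - f b * (w a - w b) =
            ∫ t in Ioc a b, (f t - f b) ∂μ := by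
          rw [integral_sub (haz_integrableOn hμ hfc ha hb hab)
            (by
              haveI : IsFiniteMeasure (μ.restrict (Ioc a b)) :=
                ⟨by rwa [Measure.restrict_apply_univ]⟩
              exact integrable_const (f b)), hconst]
          ring
        rw [hint]
        have := norm_setIntegral_le_of_norm_le_const (μ := μ) (s := Ioc a b)
          (f := fun t => f t - f b) (C := ε') hfin ?_
        · rwa [Real.norm_eq_abs, measureReal_def, htoReal] at this
        · intro x hx
          rw [Real.norm_eq_abs]
          refine hmod x ⟨ha.1.trans hx.1.le, hx.2.trans hb.2⟩ b hb ?_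
          rw [abs_sub_comm, abs_of_nonneg (by linarith [hx.2] : (0:ℝ) ≤ b - x)]
          have : b - x < b - a := by linarith [hx.1]
          rw [hba] at this
          linarith
      -- combine
      rw [Finset.sum_range_succ, hcast, hsplit]
      have harr : (∫ t in Ioc 0 a, f t ∂μ) + (∫ t in Ioc a b, f t ∂μ) -
          (∑ i ∈ Finset.range j, f ((i+1) * h) * (w (i * h) - w ((i+1) * h)) +
            f b * (w a - w b)) =
          ((∫ t in Ioc 0 a, f t ∂μ) -
            ∑ i ∈ Finset.range j, f ((i+1) * h) * (w (i * h) - w ((i+1) * h))) +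
          ((∫ t in Ioc a b, f t ∂μ) - f b * (w a - w b)) := by ring
      calc |(∫ t in Ioc 0 a, f t ∂μ) + (∫ t in Ioc a b, f t ∂μ) -
            (∑ i ∈ Finset.range j, f ((i+1) * h) * (w (i * h) - w ((i+1) * h)) +
              f b * (w a - w b))|
          ≤ |(∫ t in Ioc 0 a, f t ∂μ) -
              ∑ i ∈ Finset.range j, f ((i+1) * h) * (w (i * h) - w ((i+1) * h))| +
            |(∫ t in Ioc a b, f t ∂μ) - f b * (w a - w b)| := by
            rw [harr]; exact abs_add_le _ _
        _ ≤ ε' * (w 0 - w a) + ε' * (w a - w b) := add_le_add ih' hmid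
        _ = ε' * (w 0 - w b) := by ring
  have := key k le_rfl
  rwa [hkh] at this

lemma haz_le_biSup {τ : ℝ} {g : ℝ → ℝ} (hb : ∀ t ∈ Icc (0:ℝ) τ, |g t| ≤ 2)
    {t : ℝ} (ht : t ∈ Icc (0:ℝ) τ) : |g t| ≤ ⨆ s : Icc (0:ℝ) τ, |g s| :=
  le_ciSup (f := fun s : Icc (0:ℝ) τ => |g s|)
    ⟨2, by rintro x ⟨s, rfl⟩; exact hb s s.2⟩ ⟨t, ht⟩

set_option maxHeartbeats 1000000 in
/-- **Continuity of normalized hazard-type integrals under uniform convergence**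
(supporting lemma for the GLR statistic).  `u n, v n, u₀, v₀ : [0,τ] → [0,1]` are
nonincreasing right-continuous with `u₀`, `v₀` continuous, `sup |u n - u₀| → 0`,
`sup |v n - v₀| → 0`, and `λ uₙ(t-) + (1-λ) vₙ(t-) ≥ δ` on `(0,τ]`.  `ν n` (resp. `ν₀`)
is the nonnegative Lebesgue–Stieltjes measure generated by `v n` (resp. `v₀`), so that
`∫ f dv = -∫ f ∂ν`.  Then
`∫_{(0,τ]} uₙ(t-)/(λ uₙ(t-) + (1-λ) vₙ(t-)) dvₙ(t) → ∫_{(0,τ]} u₀/(λ u₀ + (1-λ) v₀) dv₀`. -/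
theorem normalized_hazard_integral_continuity
    (τ δ lam : ℝ) (hτ : 0 < τ) (hδ : 0 < δ) (hlam : lam ∈ Set.Icc (0 : ℝ) 1)
    (u v : ℕ → ℝ → ℝ) (u₀ v₀ : ℝ → ℝ)
    (humono : ∀ n, AntitoneOn (u n) (Set.Icc 0 τ))
    (hvmono : ∀ n, AntitoneOn (v n) (Set.Icc 0 τ))
    (hurc : ∀ n, ∀ t ∈ Set.Ico 0 τ, ContinuousWithinAt (u n) (Set.Ici t) t)
    (hvrc : ∀ n, ∀ t ∈ Set.Ico 0 τ, ContinuousWithinAt (v n) (Set.Ici t) t)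
    (hurange : ∀ n, ∀ t ∈ Set.Icc 0 τ, u n t ∈ Set.Icc (0 : ℝ) 1)
    (hvrange : ∀ n, ∀ t ∈ Set.Icc 0 τ, v n t ∈ Set.Icc (0 : ℝ) 1)
    (hu₀mono : AntitoneOn u₀ (Set.Icc 0 τ)) (hv₀mono : AntitoneOn v₀ (Set.Icc 0 τ))
    (hu₀range : ∀ t ∈ Set.Icc 0 τ, u₀ t ∈ Set.Icc (0 : ℝ) 1)
    (hv₀range : ∀ t ∈ Set.Icc 0 τ, v₀ t ∈ Set.Icc (0 : ℝ) 1)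
    (hu₀cont : ContinuousOn u₀ (Set.Icc 0 τ)) (hv₀cont : ContinuousOn v₀ (Set.Icc 0 τ))
    (huconv : Tendsto (fun n => ⨆ t : Set.Icc (0 : ℝ) τ, |u n t - u₀ t|) atTop (𝓝 0))
    (hvconv : Tendsto (fun n => ⨆ t : Set.Icc (0 : ℝ) τ, |v n t - v₀ t|) atTop (𝓝 0))
    (hlb : ∀ n, ∀ t ∈ Set.Ioc 0 τ,
      δ ≤ lam * Function.leftLim (u n) t + (1 - lam) * Function.leftLim (v n) t)
    (ν : ℕ → Measure ℝ) (ν₀ : Measure ℝ)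
    (hν : ∀ n, ∀ a b : ℝ, a ∈ Set.Icc 0 τ → b ∈ Set.Icc 0 τ → a ≤ b →
      ν n (Set.Ioc a b) = ENNReal.ofReal (v n a - v n b))
    (hν₀ : ∀ a b : ℝ, a ∈ Set.Icc 0 τ → b ∈ Set.Icc 0 τ → a ≤ b →
      ν₀ (Set.Ioc a b) = ENNReal.ofReal (v₀ a - v₀ b)) :
    Tendsto
      (fun n => -∫ t in Set.Ioc (0 : ℝ) τ,
          Function.leftLim (u n) t /
            (lam * Function.leftLim (u n) t + (1 - lam) * Function.leftLim (v n) t) ∂(ν n))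
      atTop
      (𝓝 (-∫ t in Set.Ioc (0 : ℝ) τ, u₀ t / (lam * u₀ t + (1 - lam) * v₀ t) ∂ν₀)) := by
  have hl0 : 0 ≤ lam := hlam.1
  have hl1 : lam ≤ 1 := hlam.2
  have h0τ : (0:ℝ) ∈ Icc (0:ℝ) τ := ⟨le_rfl, hτ.le⟩
  have hττ : τ ∈ Icc (0:ℝ) τ := ⟨hτ.le, le_rfl⟩
  set Mu : ℕ → ℝ := fun n => ⨆ t : Set.Icc (0:ℝ) τ, |u n t - u₀ t| with hMudef
  set Mv : ℕ → ℝ := fun n => ⨆ t : Set.Icc (0:ℝ) τ, |v n t - v₀ t| with hMvdef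
  have hMuB : ∀ n, ∀ t ∈ Icc (0:ℝ) τ, |u n t - u₀ t| ≤ Mu n := by
    intro n t ht
    refine haz_le_biSup (g := fun x => u n x - u₀ x) (fun s hs => ?_) ht
    have h1 := hurange n s hs; have h2 := hu₀range s hs
    show |u n s - u₀ s| ≤ 2
    rw [abs_le]; constructor <;> [linarith [h1.1, h2.2]; linarith [h1.2, h2.1]]
  have hMvB : ∀ n, ∀ t ∈ Icc (0:ℝ) τ, |v n t - v₀ t| ≤ Mv n := by
    intro n t ht
    refine haz_le_biSup (g := fun x => v n x - v₀ x) (fun s hs => ?_) ht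
    have h1 := hvrange n s hs; have h2 := hv₀range s hs
    show |v n s - v₀ s| ≤ 2
    rw [abs_le]; constructor <;> [linarith [h1.1, h2.2]; linarith [h1.2, h2.1]]
  have hMu0 : ∀ n, 0 ≤ Mu n := fun n => (abs_nonneg _).trans (hMuB n 0 h0τ)
  have hMv0 : ∀ n, 0 ≤ Mv n := fun n => (abs_nonneg _).trans (hMvB n 0 h0τ)
  -- extensions
  set U : ℕ → ℝ → ℝ := fun n => hazExt τ (u n) with hUdef
  set V : ℕ → ℝ → ℝ := fun n => hazExt τ (v n) with hVdef
  have hUanti : ∀ n, Antitone (U n) := fun n => hazExt_antitone hτ.le (humono n) (hurange n)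
  have hVanti : ∀ n, Antitone (V n) := fun n => hazExt_antitone hτ.le (hvmono n) (hvrange n)
  have hUrange : ∀ n t, U n t ∈ Icc (0:ℝ) 1 := fun n t => hazExt_range hτ.le (hurange n) t
  have hVrange : ∀ n t, V n t ∈ Icc (0:ℝ) 1 := fun n t => hazExt_range hτ.le (hvrange n) t
  have hUeq : ∀ n, ∀ t ∈ Ioc (0:ℝ) τ, Function.leftLim (u n) t = Function.leftLim (U n) t :=
    fun n t ht => hazExt_leftLim_eq hτ.le (humono n) (hurange n) ht
  have hVeq : ∀ n, ∀ t ∈ Ioc (0:ℝ) τ, Function.leftLim (v n) t = Function.leftLim (V n) t :=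
    fun n t ht => hazExt_leftLim_eq hτ.le (hvmono n) (hvrange n) ht
  have hgU01 : ∀ n, ∀ t ∈ Ioc (0:ℝ) τ, Function.leftLim (U n) t ∈ Icc (0:ℝ) 1 :=
    fun n t ht => leftLim_mem_Icc (hUanti n) (hUrange n) t ht.1
  have hgV01 : ∀ n, ∀ t ∈ Ioc (0:ℝ) τ, Function.leftLim (V n) t ∈ Icc (0:ℝ) 1 :=
    fun n t ht => leftLim_mem_Icc (hVanti n) (hVrange n) t ht.1
  have hD : ∀ n, ∀ t ∈ Ioc (0:ℝ) τ,
      δ ≤ lam * Function.leftLim (U n) t + (1 - lam) * Function.leftLim (V n) t := by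
    intro n t ht
    have := hlb n t ht
    rwa [hUeq n t ht, hVeq n t ht] at this
  -- closeness of left limits
  have hleftIoo : ∀ t : ℝ, 0 < t → Ioo (0:ℝ) t ∈ 𝓝[<] t :=
    fun t ht => Ioo_mem_nhdsLT_of_mem ⟨ht, le_rfl⟩
  have htendu₀ : ∀ t ∈ Ioc (0:ℝ) τ, Tendsto u₀ (𝓝[<] t) (𝓝 (u₀ t)) := by
    intro t ht
    refine (hu₀cont t ⟨ht.1.le, ht.2⟩).mono_left ?_
    refine le_trans (nhdsWithin_le_of_mem (hleftIoo t ht.1)) (nhdsWithin_mono t ?_)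
    exact fun x hx => ⟨hx.1.le, hx.2.le.trans ht.2⟩
  have htendv₀ : ∀ t ∈ Ioc (0:ℝ) τ, Tendsto v₀ (𝓝[<] t) (𝓝 (v₀ t)) := by
    intro t ht
    refine (hv₀cont t ⟨ht.1.le, ht.2⟩).mono_left ?_
    refine le_trans (nhdsWithin_le_of_mem (hleftIoo t ht.1)) (nhdsWithin_mono t ?_)
    exact fun x hx => ⟨hx.1.le, hx.2.le.trans ht.2⟩
  have hgUclose : ∀ n, ∀ t ∈ Ioc (0:ℝ) τ, |Function.leftLim (U n) t - u₀ t| ≤ Mu n := by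
    intro n t ht
    refine abs_leftLim_sub_le (hUanti n) (htendu₀ t ht) ?_
    filter_upwards [hleftIoo t ht.1] with x hx
    have hxI : x ∈ Icc (0:ℝ) τ := ⟨hx.1.le, hx.2.le.trans ht.2⟩
    have : U n x = u n x := hazExt_eqOn (u n) ⟨hx.1, hx.2.le.trans ht.2⟩
    rw [this]
    exact hMuB n x hxI
  have hgVclose : ∀ n, ∀ t ∈ Ioc (0:ℝ) τ, |Function.leftLim (V n) t - v₀ t| ≤ Mv n := by
    intro n t ht
    refine abs_leftLim_sub_le (hVanti n) (htendv₀ t ht) ?_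
    filter_upwards [hleftIoo t ht.1] with x hx
    have hxI : x ∈ Icc (0:ℝ) τ := ⟨hx.1.le, hx.2.le.trans ht.2⟩
    have : V n x = v n x := hazExt_eqOn (v n) ⟨hx.1, hx.2.le.trans ht.2⟩
    rw [this]
    exact hMvB n x hxI
  -- limit denominator bounded below
  have hMsum : Tendsto (fun n => δ - (Mu n + Mv n)) atTop (𝓝 δ) := by
    have := tendsto_const_nhds (α := ℕ) (x := δ) |>.sub (huconv.add hvconv)
    simpa using this
  have hD₀Ioc : ∀ t ∈ Ioc (0:ℝ) τ, δ ≤ lam * u₀ t + (1 - lam) * v₀ t := by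
    intro t ht
    refine le_of_tendsto hMsum (Eventually.of_forall fun n => ?_)
    have h1 := abs_le.1 (hgUclose n t ht)
    have h2 := abs_le.1 (hgVclose n t ht)
    have h3 := hD n t ht
    have e1 : lam * Function.leftLim (U n) t ≤ lam * (u₀ t + Mu n) :=
      mul_le_mul_of_nonneg_left (by linarith [h1.2]) hl0
    have e2 : (1 - lam) * Function.leftLim (V n) t ≤ (1 - lam) * (v₀ t + Mv n) :=
      mul_le_mul_of_nonneg_left (by linarith [h2.2]) (by linarith)
    have e3 : 0 ≤ (1 - lam) * Mu n := mul_nonneg (by linarith) (hMu0 n)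
    have e4 : 0 ≤ lam * Mv n := mul_nonneg hl0 (hMv0 n)
    nlinarith [e1, e2, e3, e4]
  have hD₀ : ∀ t ∈ Icc (0:ℝ) τ, δ ≤ lam * u₀ t + (1 - lam) * v₀ t := by
    intro t ht
    rcases eq_or_lt_of_le ht.1 with h | h
    · subst h
      have hne : (𝓝[Ioc (0:ℝ) τ] (0:ℝ)).NeBot := by
        refine mem_closure_iff_nhdsWithin_neBot.1 ?_
        rw [closure_Ioc hτ.ne]
        exact h0τ
      have hC : ContinuousWithinAt (fun s => lam * u₀ s + (1 - lam) * v₀ s) (Icc 0 τ) 0 :=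
        ((continuousWithinAt_const.mul (hu₀cont 0 h0τ)).add
          (continuousWithinAt_const.mul (hv₀cont 0 h0τ)))
      have hC' : Tendsto (fun s => lam * u₀ s + (1 - lam) * v₀ s) (𝓝[Ioc (0:ℝ) τ] 0)
          (𝓝 (lam * u₀ 0 + (1 - lam) * v₀ 0)) :=
        hC.mono_left (nhdsWithin_mono _ Ioc_subset_Icc_self)
      refine ge_of_tendsto hC' ?_
      filter_upwards [self_mem_nhdsWithin] with s hs using hD₀Ioc s hs
    · exact hD₀Ioc t ⟨h, ht.2⟩
  -- the limit integrand
  set f₀ : ℝ → ℝ := fun t => u₀ t / (lam * u₀ t + (1 - lam) * v₀ t) with hf₀def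
  have hf₀cont : ContinuousOn f₀ (Icc 0 τ) := by
    refine hu₀cont.div ((continuousOn_const.mul hu₀cont).add (continuousOn_const.mul hv₀cont))
      fun t ht => ?_
    exact ne_of_gt (lt_of_lt_of_le hδ (hD₀ t ht))
  have hf₀bd : ∀ t ∈ Icc (0:ℝ) τ, |f₀ t| ≤ 1 / δ := by
    intro t ht
    have hd := hD₀ t ht
    have hu := hu₀range t ht
    rw [hf₀def, abs_of_nonneg (div_nonneg hu.1 (by linarith))]
    exact div_le_div₀ zero_le_one hu.2 hδ hd
  set F : ℕ → ℝ → ℝ := fun n t => Function.leftLim (U n) t /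
      (lam * Function.leftLim (U n) t + (1 - lam) * Function.leftLim (V n) t) with hFdef
  have hFbd : ∀ n, ∀ t ∈ Ioc (0:ℝ) τ, |F n t| ≤ 1 / δ := by
    intro n t ht
    have hd := hD n t ht
    have hu := hgU01 n t ht
    rw [hFdef, abs_of_nonneg (div_nonneg hu.1 (by linarith))]
    exact div_le_div₀ zero_le_one hu.2 hδ hd
  -- closeness of integrands
  have hFclose : ∀ n, ∀ t ∈ Ioc (0:ℝ) τ,
      |F n t - f₀ t| ≤ (Mu n + Mv n) / δ ^ 2 + Mu n / δ := by
    intro n t ht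
    have htI : t ∈ Icc (0:ℝ) τ := ⟨ht.1.le, ht.2⟩
    set a : ℝ := Function.leftLim (U n) t
    set b : ℝ := u₀ t
    set c : ℝ := lam * Function.leftLim (U n) t + (1 - lam) * Function.leftLim (V n) t
    set d : ℝ := lam * u₀ t + (1 - lam) * v₀ t
    have hc : δ ≤ c := hD n t ht
    have hd : δ ≤ d := hD₀ t htI
    have hc0 : 0 < c := lt_of_lt_of_le hδ hc
    have hd0 : 0 < d := lt_of_lt_of_le hδ hd
    have ha01 := hgU01 n t ht
    have hab : |a - b| ≤ Mu n := hgUclose n t ht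
    have hVcl : |Function.leftLim (V n) t - v₀ t| ≤ Mv n := hgVclose n t ht
    have hdc : |d - c| ≤ Mu n + Mv n := by
      have hrw : d - c = lam * (u₀ t - Function.leftLim (U n) t) +
          (1 - lam) * (v₀ t - Function.leftLim (V n) t) := by ring
      rw [hrw]
      refine (abs_add_le _ _).trans ?_
      rw [abs_mul, abs_mul, abs_of_nonneg hl0, abs_of_nonneg (by linarith : (0:ℝ) ≤ 1 - lam)]
      have b1 : lam * |u₀ t - Function.leftLim (U n) t| ≤ lam * Mu n :=
        mul_le_mul_of_nonneg_left (by rwa [abs_sub_comm]) hl0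
      have b2 : (1 - lam) * |v₀ t - Function.leftLim (V n) t| ≤ (1 - lam) * Mv n :=
        mul_le_mul_of_nonneg_left (by rwa [abs_sub_comm]) (by linarith)
      have e3 : 0 ≤ (1 - lam) * Mu n := mul_nonneg (by linarith) (hMu0 n)
      have e4 : 0 ≤ lam * Mv n := mul_nonneg hl0 (hMv0 n)
      nlinarith
    have hid : F n t - f₀ t = a * (d - c) / (c * d) + (a - b) / d := by
      show a / c - b / d = _
      rw [div_add_div _ _ (mul_pos hc0 hd0).ne' hd0.ne', div_sub_div _ _ hc0.ne' hd0.ne',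
        div_eq_div_iff (mul_pos hc0 hd0).ne' (mul_pos (mul_pos hc0 hd0) hd0).ne']
      ring
    rw [hid]
    refine (abs_add_le _ _).trans (add_le_add ?_ ?_)
    · rw [abs_div, abs_mul, abs_of_pos (mul_pos hc0 hd0)]
      have hnum : |a| * |d - c| ≤ 1 * (Mu n + Mv n) :=
        mul_le_mul (abs_le.2 ⟨by linarith [ha01.1], ha01.2⟩) hdc (abs_nonneg _) zero_le_one
      have hden : δ ^ 2 ≤ c * d := by nlinarith
      calc |a| * |d - c| / (c * d) ≤ (1 * (Mu n + Mv n)) / δ ^ 2 :=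
            div_le_div₀ (by nlinarith [hMu0 n, hMv0 n]) hnum (pow_pos hδ 2) hden
        _ = (Mu n + Mv n) / δ ^ 2 := by ring
    · rw [abs_div, abs_of_pos hd0]
      exact div_le_div₀ (hMu0 n) hab hδ hd
  -- measure masses
  have hmassn : ∀ n, ν n (Ioc (0:ℝ) τ) = ENNReal.ofReal (v n 0 - v n τ) :=
    fun n => hν n 0 τ h0τ hττ hτ.le
  have hmassfin : ∀ n, ν n (Ioc (0:ℝ) τ) < ⊤ := fun n => by
    rw [hmassn n]; exact ENNReal.ofReal_lt_top
  have hmass1 : ∀ n, (ν n (Ioc (0:ℝ) τ)).toReal ≤ 1 := by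
    intro n
    rw [hmassn n, ENNReal.toReal_ofReal (sub_nonneg.2 (hvmono n h0τ hττ hτ.le))]
    linarith [(hvrange n 0 h0τ).2, (hvrange n τ hττ).1]
  -- integrability
  have hFmeas : ∀ n, Measurable (F n) := by
    intro n
    have m1 : Measurable (Function.leftLim (U n)) := (hUanti n).leftLim.measurable
    have m2 : Measurable (Function.leftLim (V n)) := (hVanti n).leftLim.measurable
    exact m1.div ((measurable_const.mul m1).add (measurable_const.mul m2))
  have hFint : ∀ n, IntegrableOn (F n) (Ioc (0:ℝ) τ) (ν n) := by
    intro n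
    haveI : IsFiniteMeasure ((ν n).restrict (Ioc (0:ℝ) τ)) :=
      ⟨by rw [Measure.restrict_apply_univ]; exact hmassfin n⟩
    refine Integrable.mono' (integrable_const (1 / δ))
      ((hFmeas n).aestronglyMeasurable.restrict) ?_
    refine (ae_restrict_iff' measurableSet_Ioc).2 (ae_of_all _ fun t ht => ?_)
    rw [Real.norm_eq_abs]
    exact hFbd n t ht
  have hf₀int : ∀ n, IntegrableOn f₀ (Ioc (0:ℝ) τ) (ν n) :=
    fun n => haz_integrableOn (hν n) hf₀cont h0τ hττ hτ.le
  have hf₀int₀ : IntegrableOn f₀ (Ioc (0:ℝ) τ) ν₀ :=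
    haz_integrableOn hν₀ hf₀cont h0τ hττ hτ.le
  -- A-term: ∫ F n dν n - ∫ f₀ dν n → 0
  have hA : Tendsto (fun n => (∫ t in Ioc (0:ℝ) τ, F n t ∂ν n) -
      ∫ t in Ioc (0:ℝ) τ, f₀ t ∂ν n) atTop (𝓝 0) := by
    have hCt : Tendsto (fun n => ((Mu n + Mv n) / δ ^ 2 + Mu n / δ)) atTop (𝓝 0) := by
      have := ((huconv.add hvconv).div_const (δ ^ 2)).add (huconv.div_const δ)
      simpa using this
    rw [tendsto_zero_iff_norm_tendsto_zero]
    refine squeeze_zero (fun n => norm_nonneg _) (fun n => ?_) hCt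
    have hsub : (∫ t in Ioc (0:ℝ) τ, F n t ∂ν n) - (∫ t in Ioc (0:ℝ) τ, f₀ t ∂ν n) =
        ∫ t in Ioc (0:ℝ) τ, (F n t - f₀ t) ∂ν n :=
      (integral_sub (hFint n) (hf₀int n)).symm
    rw [hsub]
    have hb := norm_setIntegral_le_of_norm_le_const (μ := ν n) (s := Ioc (0:ℝ) τ)
      (f := fun t => F n t - f₀ t) (C := (Mu n + Mv n) / δ ^ 2 + Mu n / δ)
      (hmassfin n)
      (fun x hx => by rw [Real.norm_eq_abs]; exact hFclose n x hx)
    refine hb.trans ?_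
    have hC0 : 0 ≤ (Mu n + Mv n) / δ ^ 2 + Mu n / δ :=
      add_nonneg (div_nonneg (add_nonneg (hMu0 n) (hMv0 n)) (sq_nonneg δ))
        (div_nonneg (hMu0 n) hδ.le)
    calc ((Mu n + Mv n) / δ ^ 2 + Mu n / δ) * (ν n (Ioc (0:ℝ) τ)).toReal
        ≤ ((Mu n + Mv n) / δ ^ 2 + Mu n / δ) * 1 :=
          mul_le_mul_of_nonneg_left (hmass1 n) hC0
      _ = (Mu n + Mv n) / δ ^ 2 + Mu n / δ := mul_one _
  -- B-term: ∫ f₀ dν n → ∫ f₀ dν₀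
  have hB : Tendsto (fun n => ∫ t in Ioc (0:ℝ) τ, f₀ t ∂ν n) atTop
      (𝓝 (∫ t in Ioc (0:ℝ) τ, f₀ t ∂ν₀)) := by
    rw [Metric.tendsto_atTop]
    intro ε hε
    have hUC := (isCompact_Icc (a := (0:ℝ)) (b := τ)).uniformContinuousOn_of_continuous hf₀cont
    rw [Metric.uniformContinuousOn_iff] at hUC
    obtain ⟨δ', hδ', hmod⟩ := hUC (ε / 4) (by linarith)
    have hmod' : ∀ s ∈ Icc (0:ℝ) τ, ∀ t ∈ Icc (0:ℝ) τ, |s - t| < δ' → |f₀ s - f₀ t| ≤ ε / 4 := by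
      intro s hs t ht hst
      have := hmod s hs t ht (by rwa [Real.dist_eq])
      rw [Real.dist_eq] at this
      exact this.le
    obtain ⟨k, hk⟩ := exists_nat_gt (τ / δ')
    have hk0 : 0 < k := by
      have : (0:ℝ) < k := lt_trans (div_pos hτ hδ') hk
      exact_mod_cast this
    have hk0' : (0:ℝ) < k := by exact_mod_cast hk0
    have hkδ : τ / k < δ' := by
      rw [div_lt_iff₀ hk0']
      have := (div_lt_iff₀ hδ').1 hk
      linarith
    set h : ℝ := τ / k with hhdef
    have hmem : ∀ j : ℕ, j ≤ k → (j : ℝ) * h ∈ Icc (0:ℝ) τ := by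
      intro j hj
      have hhpos : 0 < h := div_pos hτ hk0'
      constructor
      · positivity
      · have : (j:ℝ) * h ≤ (k:ℝ) * h :=
          mul_le_mul_of_nonneg_right (by exact_mod_cast hj) hhpos.le
        rwa [hhdef, mul_div_cancel₀ _ hk0'.ne'] at this
    set S : ℕ → ℝ := fun n => ∑ i ∈ Finset.range k,
      f₀ ((i + 1) * h) * (v n (i * h) - v n ((i + 1) * h)) with hSdef
    set S₀ : ℝ := ∑ i ∈ Finset.range k,
      f₀ ((i + 1) * h) * (v₀ (i * h) - v₀ ((i + 1) * h)) with hS₀def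
    have hvpt : ∀ t ∈ Icc (0:ℝ) τ, Tendsto (fun n => v n t) atTop (𝓝 (v₀ t)) := by
      intro t ht
      have h1 : Tendsto (fun n => |v n t - v₀ t|) atTop (𝓝 0) :=
        squeeze_zero (fun n => abs_nonneg _) (fun n => hMvB n t ht) hvconv
      have h2 : Tendsto (fun n => v n t - v₀ t) atTop (𝓝 0) := by
        rw [tendsto_zero_iff_norm_tendsto_zero]
        simpa [Real.norm_eq_abs] using h1
      have := h2.add (tendsto_const_nhds (x := v₀ t))
      simpa using this
    have hS : Tendsto S atTop (𝓝 S₀) := by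
      refine tendsto_finset_sum _ fun i hi => ?_
      have hi' : i + 1 ≤ k := Finset.mem_range.1 hi
      have hm1 : (i : ℝ) * h ∈ Icc (0:ℝ) τ := hmem i (Nat.le_of_succ_le hi')
      have hm2 : ((i : ℝ) + 1) * h ∈ Icc (0:ℝ) τ := by
        have := hmem (i + 1) hi'
        rwa [Nat.cast_add, Nat.cast_one] at this
      exact ((hvpt _ hm1).sub (hvpt _ hm2)).const_mul _
    obtain ⟨N, hN⟩ := Metric.tendsto_atTop.1 hS (ε / 4) (by linarith)
    refine ⟨N, fun n hn => ?_⟩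
    have h1 := haz_partition_approx hτ (hν n) (hvmono n) hf₀cont hδ' hmod' hk0 hkδ
    have h2 := haz_partition_approx hτ hν₀ hv₀mono hf₀cont hδ' hmod' hk0 hkδ
    have hb1 : ε / 4 * (v n 0 - v n τ) ≤ ε / 4 := by
      have h3 : v n 0 - v n τ ≤ 1 := by
        have := hvmono n h0τ hττ hτ.le
        have h1' := (hvrange n 0 h0τ).2
        have h2' := (hvrange n τ hττ).1
        linarith
      calc ε / 4 * (v n 0 - v n τ) ≤ ε / 4 * 1 :=
            mul_le_mul_of_nonneg_left h3 (by linarith)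
        _ = ε / 4 := mul_one _
    have hb2 : ε / 4 * (v₀ 0 - v₀ τ) ≤ ε / 4 := by
      have h3 : v₀ 0 - v₀ τ ≤ 1 := by
        have := hv₀mono h0τ hττ hτ.le
        have h1' := (hv₀range 0 h0τ).2
        have h2' := (hv₀range τ hττ).1
        linarith
      calc ε / 4 * (v₀ 0 - v₀ τ) ≤ ε / 4 * 1 :=
            mul_le_mul_of_nonneg_left h3 (by linarith)
        _ = ε / 4 := mul_one _
    have hSn := hN n hn
    rw [Real.dist_eq] at hSn ⊢
    have hdecomp : (∫ t in Ioc (0:ℝ) τ, f₀ t ∂ν n) - (∫ t in Ioc (0:ℝ) τ, f₀ t ∂ν₀) =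
        ((∫ t in Ioc (0:ℝ) τ, f₀ t ∂ν n) - S n) + (S n - S₀) +
          (S₀ - (∫ t in Ioc (0:ℝ) τ, f₀ t ∂ν₀)) := by ring
    rw [hdecomp]
    have habs : |((∫ t in Ioc (0:ℝ) τ, f₀ t ∂ν n) - S n) + (S n - S₀) +
          (S₀ - (∫ t in Ioc (0:ℝ) τ, f₀ t ∂ν₀))| ≤
        |(∫ t in Ioc (0:ℝ) τ, f₀ t ∂ν n) - S n| + |S n - S₀| +
          |S₀ - (∫ t in Ioc (0:ℝ) τ, f₀ t ∂ν₀)| :=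
      (abs_add_le _ _).trans (add_le_add_left (abs_add_le _ _) _)
    have h2' : |S₀ - (∫ t in Ioc (0:ℝ) τ, f₀ t ∂ν₀)| ≤ ε / 4 := by
      rw [abs_sub_comm]
      exact h2.trans hb2
    have h1' : |(∫ t in Ioc (0:ℝ) τ, f₀ t ∂ν n) - S n| ≤ ε / 4 := h1.trans hb1
    linarith
  -- assemble
  have hmain : Tendsto (fun n => ∫ t in Ioc (0:ℝ) τ, F n t ∂ν n) atTop
      (𝓝 (∫ t in Ioc (0:ℝ) τ, f₀ t ∂ν₀)) := by
    have := hA.add hB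
    rw [zero_add] at this
    refine this.congr fun n => ?_
    ring
  refine Tendsto.congr (fun n => ?_) hmain.neg
  congr 1
  refine setIntegral_congr_fun measurableSet_Ioc fun t ht => ?_
  show Function.leftLim (U n) t /
      (lam * Function.leftLim (U n) t + (1 - lam) * Function.leftLim (V n) t) = _
  rw [← hUeq n t ht, ← hVeq n t ht]
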